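/- For each t let F_t̄ denote survival functions evaluated at thresholds γ(t) < β(t) ≤ α_{k,l}(t). Assume F̄(β(t))/F̄(γ(t)) → g ∈ (0,1) and F̄(α_{k,l}(t))/F̄(β(t)) → a_{k,l} ∈ (0,1) as t → ∞, for all k, l. Then for each k ≥ 0 and l ≥ 0, P{N_+(ν) = k, N_-(ν) = l} → g(1−g)^k · ∏_{h=0}^{l−1}(1 − a_{k,h}) · a_{k,l}. -/

import Mathlib

open MeasureTheory ProbabilityTheory Filter Set

/-- Numbers `(N₊(n), N₋(n))` of strengthening resp. weakening (harmful nonfatal) shocks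
among the first `n` shocks `X 0, …, X (n-1)`. -/
noncomputable def shockCounts (γ β α : ℝ) (b c : ℕ → ℝ) (X : ℕ → ℝ) : ℕ → ℕ × ℕ
  | 0 => (0, 0)
  | n + 1 =>
      let p := shockCounts γ β α b c X n
      (if γ ≤ X n ∧ X n < β ∧ p.2 = 0 then p.1 + 1 else p.1,
       if β ≤ X n ∧ X n < α + b p.1 - c p.2 then p.2 + 1 else p.2)

/-- The `(i+1)`-th shock `X i` is fatal: it exceeds the current critical boundary. -/
def fatalShock (γ β α : ℝ) (b c : ℕ → ℝ) (X : ℕ → ℝ) (i : ℕ) : Prop :=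
  α + b (shockCounts γ β α b c X i).1 - c (shockCounts γ β α b c X i).2 ≤ X i

/-- 0-based index of the first fatal shock (junk value if there is none);
the paper's `ν` equals this plus one. -/
noncomputable def nuShock (γ β α : ℝ) (b c : ℕ → ℝ) (X : ℕ → ℝ) : ℕ :=
  sInf {i | fatalShock γ β α b c X i}

/-- Survival function `F̄(x) = P(X > x)` of a law `μ` on `ℝ`, as a real number. -/
noncomputable def survival (μ : Measure ℝ) (x : ℝ) : ℝ := (μ (Set.Ioi x)).toReal

def evSet (γ β α : ℝ) (b c : ℕ → ℝ) (k l : ℕ) : Set (ℕ → ℝ) :=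
  {f | (∃ i, fatalShock γ β α b c f i) ∧
    shockCounts γ β α b c f (nuShock γ β α b c f) = (k, l)}

lemma shockCounts_zero (γ β α : ℝ) (b c : ℕ → ℝ) (f : ℕ → ℝ) :
    shockCounts γ β α b c f 0 = (0, 0) := rfl

lemma shockCounts_succ (γ β α : ℝ) (b c : ℕ → ℝ) (f : ℕ → ℝ) (n : ℕ) :
    shockCounts γ β α b c f (n + 1) =
      (if γ ≤ f n ∧ f n < β ∧ (shockCounts γ β α b c f n).2 = 0
        then (shockCounts γ β α b c f n).1 + 1 else (shockCounts γ β α b c f n).1,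
       if β ≤ f n ∧ f n < α + b (shockCounts γ β α b c f n).1
          - c (shockCounts γ β α b c f n).2
        then (shockCounts γ β α b c f n).2 + 1 else (shockCounts γ β α b c f n).2) := rfl

lemma sInf_succ_eq {S T : Set ℕ} (h0 : 0 ∉ S) (h : ∀ n, n + 1 ∈ S ↔ n ∈ T)
    (hT : T.Nonempty) : sInf S = sInf T + 1 := by
  have hS : S.Nonempty := by
    obtain ⟨n, hn⟩ := hT
    exact ⟨n + 1, (h n).2 hn⟩
  have hmem := Nat.sInf_mem hS
  refine le_antisymm (Nat.sInf_le ((h _).2 (Nat.sInf_mem hT))) ?_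
  cases' hx : sInf S with m
  · exact absurd (hx ▸ hmem) h0
  · have : m ∈ T := (h m).1 (hx ▸ hmem)
    exact Nat.succ_le_succ (Nat.sInf_le this)

lemma evSet_transfer {γ β α : ℝ} {b c : ℕ → ℝ} {γ' β' α' : ℝ} {b' c' : ℕ → ℝ}
    {f : ℕ → ℝ} (φ : ℕ × ℕ → ℕ × ℕ)
    (hsc : ∀ n, shockCounts γ β α b c f (n + 1)
      = φ (shockCounts γ' β' α' b' c' (fun i => f (i + 1)) n))
    (hfat0 : ¬ fatalShock γ β α b c f 0)
    (hfat : ∀ n, fatalShock γ β α b c f (n + 1)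
      ↔ fatalShock γ' β' α' b' c' (fun i => f (i + 1)) n)
    (k l : ℕ) :
    f ∈ evSet γ β α b c k l ↔
      ((∃ i, fatalShock γ' β' α' b' c' (fun i => f (i + 1)) i) ∧
        φ (shockCounts γ' β' α' b' c' (fun i => f (i + 1))
          (nuShock γ' β' α' b' c' (fun i => f (i + 1)))) = (k, l)) := by
  set f' := fun i => f (i + 1) with hf'
  have hex : (∃ i, fatalShock γ β α b c f i) ↔ ∃ i, fatalShock γ' β' α' b' c' f' i := by
    constructor
    · rintro ⟨i, hi⟩
      cases' i with n
      · exact absurd hi hfat0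
      · exact ⟨n, (hfat n).1 hi⟩
    · rintro ⟨n, hn⟩
      exact ⟨n + 1, (hfat n).2 hn⟩
  constructor
  · rintro ⟨hexS, hval⟩
    have hT : {i | fatalShock γ' β' α' b' c' f' i}.Nonempty := hex.1 hexS
    have hnu : nuShock γ β α b c f = nuShock γ' β' α' b' c' f' + 1 :=
      sInf_succ_eq hfat0 hfat hT
    refine ⟨hex.1 hexS, ?_⟩
    rw [hnu] at hval
    rw [← hsc]
    exact hval
  · rintro ⟨hexT, hval⟩
    have hnu : nuShock γ β α b c f = nuShock γ' β' α' b' c' f' + 1 :=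
      sInf_succ_eq hfat0 hfat hexT
    refine ⟨hex.2 hexT, ?_⟩
    rw [hnu, hsc]
    exact hval

section Dynamics

variable {γ β α : ℝ} {b c : ℕ → ℝ} {f : ℕ → ℝ}

/-! ### Branch 0 : `f 0 < γ` (harmless shock) -/

lemma sc_shift_null (hγβ : γ ≤ β) (hf : f 0 < γ) (n : ℕ) :
    shockCounts γ β α b c f (n + 1)
      = shockCounts γ β α b c (fun i => f (i + 1)) n := by
  induction n with
  | zero =>
      rw [shockCounts_succ, shockCounts_zero, shockCounts_zero]
      rw [if_neg, if_neg]
      · exact fun h => absurd h.1 (not_le.2 (lt_of_lt_of_le hf hγβ))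
      · exact fun h => absurd h.1 (not_le.2 hf)
  | succ n ih =>
      rw [shockCounts_succ γ β α b c f (n + 1), ih,
        shockCounts_succ γ β α b c (fun i => f (i + 1)) n]

lemma evSet_null (hγβ : γ ≤ β) (hβα : β ≤ α + b 0 - c 0) (hf : f 0 < γ) (k l : ℕ) :
    f ∈ evSet γ β α b c k l ↔ (fun i => f (i + 1)) ∈ evSet γ β α b c k l := by
  have h0 : ¬ fatalShock γ β α b c f 0 := by
    unfold fatalShock
    rw [shockCounts_zero]
    exact not_le.2 (lt_of_lt_of_le hf (le_trans hγβ hβα))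
  have hfat : ∀ n, fatalShock γ β α b c f (n + 1)
      ↔ fatalShock γ β α b c (fun i => f (i + 1)) n := by
    intro n
    unfold fatalShock
    rw [sc_shift_null hγβ hf n]
  exact evSet_transfer id (fun n => sc_shift_null hγβ hf n) h0 hfat k l

/-! ### Branch S : `γ ≤ f 0 < β` (strengthening shock) -/

lemma sc_shift_str (hγ : γ ≤ f 0) (hf : f 0 < β) (n : ℕ) :
    shockCounts γ β α b c f (n + 1)
      = (fun p => (p.1 + 1, p.2))
          (shockCounts γ β α (fun j => b (j + 1)) c (fun i => f (i + 1)) n) := by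
  induction n with
  | zero =>
      rw [shockCounts_succ, shockCounts_zero, shockCounts_zero]
      rw [if_pos ⟨hγ, hf, rfl⟩, if_neg (fun h => absurd h.1 (not_le.2 hf))]
  | succ n ih =>
      rw [shockCounts_succ γ β α b c f (n + 1), ih,
        shockCounts_succ γ β α (fun j => b (j + 1)) c (fun i => f (i + 1)) n]
      simp only [apply_ite (fun q : ℕ × ℕ => ((fun p : ℕ × ℕ => (p.1 + 1, p.2)) q))]
      simp
      split <;> rfl

lemma fatal_iff_str (hγ : γ ≤ f 0) (hf : f 0 < β) (n : ℕ) :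
    fatalShock γ β α b c f (n + 1)
      ↔ fatalShock γ β α (fun j => b (j + 1)) c (fun i => f (i + 1)) n := by
  unfold fatalShock
  rw [sc_shift_str hγ hf n]

lemma evSet_str (hγ : γ ≤ f 0) (hf : f 0 < β) (hβα : β ≤ α + b 0 - c 0) (k l : ℕ) :
    f ∈ evSet γ β α b c k l ↔
      (0 < k ∧ (fun i => f (i + 1)) ∈ evSet γ β α (fun j => b (j + 1)) c (k - 1) l) := by
  have h0 : ¬ fatalShock γ β α b c f 0 := by
    unfold fatalShock
    rw [shockCounts_zero]
    exact not_le.2 (lt_of_lt_of_le hf hβα)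
  rw [evSet_transfer (fun p => (p.1 + 1, p.2)) (fun n => sc_shift_str hγ hf n) h0
    (fun n => fatal_iff_str hγ hf n) k l]
  simp only [evSet, Set.mem_setOf_eq]
  constructor
  · rintro ⟨hex, hval⟩
    have h1 : (shockCounts γ β α (fun j => b (j + 1)) c (fun i => f (i + 1))
        (nuShock γ β α (fun j => b (j + 1)) c (fun i => f (i + 1)))).1 + 1 = k :=
      congrArg Prod.fst hval
    have h2 := congrArg Prod.snd hval
    refine ⟨by omega, hex, ?_⟩
    have hk : k - 1 = (shockCounts γ β α (fun j => b (j + 1)) c (fun i => f (i + 1))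
        (nuShock γ β α (fun j => b (j + 1)) c (fun i => f (i + 1)))).1 := by omega
    exact Prod.ext (by omega) h2
  · rintro ⟨hk, hex, hval⟩
    refine ⟨hex, ?_⟩
    rw [hval]
    simp only
    congr 1
    omega

/-! ### Branch W : `β ≤ f 0 < α + b 0 - c 0` (weakening shock) -/

lemma sc_shift_weak (hβ : β ≤ f 0) (hf : f 0 < α + b 0 - c 0) (n : ℕ) :
    shockCounts γ β α b c f (n + 1)
      = (fun p => (p.1, p.2 + 1))
          (shockCounts β β α b (fun h => c (h + 1)) (fun i => f (i + 1)) n) := by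
  induction n with
  | zero =>
      rw [shockCounts_succ, shockCounts_zero, shockCounts_zero]
      rw [if_neg (fun h => absurd h.2.1 (not_lt.2 hβ)), if_pos ⟨hβ, hf⟩]
  | succ n ih =>
      rw [shockCounts_succ γ β α b c f (n + 1), ih,
        shockCounts_succ β β α b (fun h => c (h + 1)) (fun i => f (i + 1)) n]
      simp only
      rw [if_neg (show ¬(γ ≤ f (n + 1) ∧ f (n + 1) < β ∧
          (shockCounts β β α b (fun h => c (h + 1)) (fun i => f (i + 1)) n).2 + 1 = 0)
          from fun h => Nat.succ_ne_zero _ h.2.2),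
        if_neg (show ¬(β ≤ f (n + 1) ∧ f (n + 1) < β ∧
          (shockCounts β β α b (fun h => c (h + 1)) (fun i => f (i + 1)) n).2 = 0)
          from fun h => absurd h.2.1 (not_lt.2 h.1))]
      congr 1
      split <;> rfl

lemma fatal_iff_weak (hβ : β ≤ f 0) (hf : f 0 < α + b 0 - c 0) (n : ℕ) :
    fatalShock γ β α b c f (n + 1)
      ↔ fatalShock β β α b (fun h => c (h + 1)) (fun i => f (i + 1)) n := by
  unfold fatalShock
  rw [sc_shift_weak hβ hf n]

lemma evSet_weak (hβ : β ≤ f 0) (hf : f 0 < α + b 0 - c 0) (k l : ℕ) :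
    f ∈ evSet γ β α b c k l ↔
      (0 < l ∧ (fun i => f (i + 1)) ∈ evSet β β α b (fun h => c (h + 1)) k (l - 1)) := by
  have h0 : ¬ fatalShock γ β α b c f 0 := by
    unfold fatalShock
    rw [shockCounts_zero]
    exact not_le.2 hf
  rw [evSet_transfer (fun p => (p.1, p.2 + 1)) (fun n => sc_shift_weak hβ hf n) h0
    (fun n => fatal_iff_weak hβ hf n) k l]
  simp only [evSet, Set.mem_setOf_eq]
  constructor
  · rintro ⟨hex, hval⟩
    have h1 := congrArg Prod.fst hval
    have h2 : (shockCounts β β α b (fun h => c (h + 1)) (fun i => f (i + 1))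
        (nuShock β β α b (fun h => c (h + 1)) (fun i => f (i + 1)))).2 + 1 = l :=
      congrArg Prod.snd hval
    exact ⟨by omega, hex, Prod.ext h1 (by omega)⟩
  · rintro ⟨hl, hex, hval⟩
    refine ⟨hex, ?_⟩
    rw [hval]
    simp only
    congr 1
    omega

/-! ### Branch D : `α + b 0 - c 0 ≤ f 0` (fatal first shock) -/

lemma evSet_fatal (hf : α + b 0 - c 0 ≤ f 0) (k l : ℕ) :
    f ∈ evSet γ β α b c k l ↔ (k = 0 ∧ l = 0) := by
  have h0 : fatalShock γ β α b c f 0 := by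
    unfold fatalShock
    rw [shockCounts_zero]
    exact hf
  have hnu : nuShock γ β α b c f = 0 := Nat.sInf_eq_zero.2 (Or.inl h0)
  simp only [evSet, Set.mem_setOf_eq, hnu, shockCounts_zero]
  constructor
  · rintro ⟨-, hval⟩
    exact ⟨(congrArg Prod.fst hval).symm, (congrArg Prod.snd hval).symm⟩
  · rintro ⟨rfl, rfl⟩
    exact ⟨⟨0, h0⟩, rfl⟩

end Dynamics


section Meas

variable (γ β α : ℝ) (b c : ℕ → ℝ)

lemma measurable_shockCounts (n : ℕ) :
    Measurable (fun f : ℕ → ℝ => shockCounts γ β α b c f n) := by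
  induction n with
  | zero => exact measurable_const
  | succ n ih =>
      have h2 : Measurable fun f : ℕ → ℝ => (shockCounts γ β α b c f n).2 :=
        measurable_snd.comp ih
      have h1 : Measurable fun f : ℕ → ℝ => (shockCounts γ β α b c f n).1 :=
        measurable_fst.comp ih
      simp only [shockCounts_succ]
      apply Measurable.prodMk
      · refine Measurable.ite ?_ (h1.add measurable_const) h1
        refine MeasurableSet.inter ?_ (MeasurableSet.inter ?_ ?_)
        · exact measurableSet_le measurable_const (measurable_pi_apply n)
        · exact measurableSet_lt (measurable_pi_apply n) measurable_const
        · exact h2 (measurableSet_singleton 0)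
      · refine Measurable.ite ?_ (h2.add measurable_const) h2
        refine MeasurableSet.inter ?_ ?_
        · exact measurableSet_le measurable_const (measurable_pi_apply n)
        · refine measurableSet_lt (measurable_pi_apply n) ?_
          exact ((measurable_of_countable (fun p : ℕ × ℕ => α + b p.1 - c p.2)).comp ih)

lemma measurableSet_fatal (i : ℕ) :
    MeasurableSet {f : ℕ → ℝ | fatalShock γ β α b c f i} := by
  apply measurableSet_le
  · exact (measurable_of_countable (fun p : ℕ × ℕ => α + b p.1 - c p.2)).comp
      (measurable_shockCounts γ β α b c i)
  · exact measurable_pi_apply i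

lemma evSet_eq_iUnion (k l : ℕ) :
    evSet γ β α b c k l =
      ⋃ i, ({f : ℕ → ℝ | fatalShock γ β α b c f i}
        ∩ (⋂ j < i, {f : ℕ → ℝ | fatalShock γ β α b c f j}ᶜ)
        ∩ ((fun f => shockCounts γ β α b c f i) ⁻¹' {(k, l)})) := by
  ext f
  simp only [evSet, Set.mem_setOf_eq, Set.mem_iUnion, Set.mem_inter_iff, Set.mem_iInter,
    Set.mem_compl_iff, Set.mem_preimage, Set.mem_singleton_iff]
  constructor
  · rintro ⟨hex, hval⟩
    refine ⟨nuShock γ β α b c f, ⟨Nat.sInf_mem hex, ?_⟩, hval⟩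
    exact fun j hj => Nat.notMem_of_lt_sInf hj
  · rintro ⟨i, ⟨hi, hmin⟩, hval⟩
    have hnu : nuShock γ β α b c f = i := by
      refine le_antisymm (Nat.sInf_le hi) ?_
      by_contra hlt
      push_neg at hlt
      exact hmin _ hlt (Nat.sInf_mem (⟨i, hi⟩ : {j | fatalShock γ β α b c f j}.Nonempty))
    exact ⟨⟨i, hi⟩, hnu ▸ hval⟩

lemma measurableSet_evSet (k l : ℕ) : MeasurableSet (evSet γ β α b c k l) := by
  rw [evSet_eq_iUnion]
  refine MeasurableSet.iUnion fun i => ?_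
  refine MeasurableSet.inter (MeasurableSet.inter (measurableSet_fatal γ β α b c i) ?_) ?_
  · exact MeasurableSet.iInter fun j => MeasurableSet.iInter fun _ =>
      (measurableSet_fatal γ β α b c j).compl
  · exact measurable_shockCounts γ β α b c i (measurableSet_singleton _)

end Meas


/-- `ν` is the law of an i.i.d. sequence with marginal `μ`. -/
def IsIIDSeq (μ : Measure ℝ) (ν : Measure (ℕ → ℝ)) : Prop :=
  ∀ (S : Finset ℕ) (t : ℕ → Set ℝ), (∀ i ∈ S, MeasurableSet (t i)) →
    ν {f | ∀ i ∈ S, f i ∈ t i} = ∏ i ∈ S, μ (t i)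

variable {μ : Measure ℝ} {ν : Measure (ℕ → ℝ)}

lemma IsIIDSeq.cyl (hν : IsIIDSeq μ ν) {B : Set ℝ} (hB : MeasurableSet B) (i : ℕ) :
    ν {f | f i ∈ B} = μ B := by
  have := hν {i} (fun _ => B) (fun _ _ => hB)
  simpa using this

lemma measurableSet_fincyl (S : Finset ℕ) (t : ℕ → Set ℝ)
    (ht : ∀ i ∈ S, MeasurableSet (t i)) :
    MeasurableSet {f : ℕ → ℝ | ∀ i ∈ S, f i ∈ t i} := by
  have : {f : ℕ → ℝ | ∀ i ∈ S, f i ∈ t i} = ⋂ i ∈ S, (fun f : ℕ → ℝ => f i) ⁻¹' t i := by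
    ext f; simp
  rw [this]
  exact MeasurableSet.biInter (S.countable_toSet) fun i hi =>
    measurable_pi_apply i (ht i hi)

lemma generateFrom_boxes :
    (inferInstance : MeasurableSpace (ℕ → ℝ)) = MeasurableSpace.generateFrom
      (pi univ '' pi univ fun _ : ℕ => {s : Set ℝ | MeasurableSet s}) := by
  refine le_antisymm ?_ ?_
  · refine iSup_le fun i => ?_
    rw [← measurable_iff_comap_le]
    intro A hA
    apply MeasurableSpace.measurableSet_generateFrom
    refine ⟨Function.update (fun _ => univ) i A, fun j _ => ?_, ?_⟩
    · by_cases h : j = i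
      · subst h; simp [hA]
      · simp [Function.update_of_ne h]
    · rw [Set.eval_preimage]
  · rw [MeasurableSpace.generateFrom_le_iff]
    rintro _ ⟨t, ht, rfl⟩
    exact MeasurableSet.univ_pi fun i => ht i (mem_univ i)

lemma IsIIDSeq.measure_univ_pi [IsProbabilityMeasure ν]
    (hν : IsIIDSeq μ ν) (t : ℕ → Set ℝ) (ht : ∀ i, MeasurableSet (t i)) :
    ν (pi univ t) = ⨅ n, ∏ i ∈ Finset.range n, μ (t i) := by
  have heq : pi univ t = ⋂ n, {f : ℕ → ℝ | ∀ i ∈ Finset.range n, f i ∈ t i} := by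
    ext f
    simp only [mem_univ_pi, Set.mem_iInter, Set.mem_setOf_eq, Finset.mem_range]
    exact ⟨fun h n i _ => h i, fun h i => h (i + 1) i (Nat.lt_succ_self i)⟩
  rw [heq]
  rw [Antitone.measure_iInter]
  · exact iInf_congr fun n => hν _ _ fun i _ => ht i
  · intro m n hmn f hf i hi
    exact hf i (Finset.mem_range.2 (lt_of_lt_of_le (Finset.mem_range.1 hi) hmn))
  · exact fun n => (measurableSet_fincyl _ _ fun i _ => ht i).nullMeasurableSet
  · exact ⟨0, measure_ne_top ν _⟩

lemma IsIIDSeq.unique {ν₁ ν₂ : Measure (ℕ → ℝ)} [IsProbabilityMeasure ν₁]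
    [IsProbabilityMeasure ν₂] (h₁ : IsIIDSeq μ ν₁) (h₂ : IsIIDSeq μ ν₂) : ν₁ = ν₂ := by
  refine ext_of_generate_finite _ generateFrom_boxes isPiSystem_pi ?_ (by simp)
  rintro _ ⟨t, ht, rfl⟩
  rw [h₁.measure_univ_pi t (fun i => ht i (mem_univ i)),
    h₂.measure_univ_pi t (fun i => ht i (mem_univ i))]

lemma measurable_shift : Measurable (fun f : ℕ → ℝ => fun i => f (i + 1)) :=
  measurable_pi_lambda _ fun i => measurable_pi_apply (i + 1)

lemma IsIIDSeq.shift (hν : IsIIDSeq μ ν) :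
    IsIIDSeq μ (Measure.map (fun f i => f (i + 1)) ν) := by
  intro S t ht
  rw [Measure.map_apply measurable_shift (measurableSet_fincyl S t ht)]
  have heq : (fun f : ℕ → ℝ => fun i => f (i + 1)) ⁻¹' {f | ∀ i ∈ S, f i ∈ t i}
      = {f : ℕ → ℝ | ∀ j ∈ S.map ⟨fun i => i + 1, add_left_injective 1⟩, f j ∈ t (j - 1)} := by
    ext f
    simp only [Set.mem_preimage, Set.mem_setOf_eq, Finset.mem_map, Function.Embedding.coeFn_mk]
    constructor
    · rintro h j ⟨i, hi, rfl⟩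
      simpa using h i hi
    · intro h i hi
      simpa using h (i + 1) ⟨i, hi, rfl⟩
  rw [heq, hν _ _ ?_]
  · rw [Finset.prod_map]
    exact Finset.prod_congr rfl fun i _ => by simp
  · rintro j hj
    obtain ⟨i, hi, rfl⟩ := Finset.mem_map.1 hj
    simpa using ht i hi

lemma IsIIDSeq.shift_eq [IsProbabilityMeasure μ] [IsProbabilityMeasure ν]
    (hν : IsIIDSeq μ ν) : Measure.map (fun f i => f (i + 1)) ν = ν := by
  haveI : IsProbabilityMeasure (Measure.map (fun f : ℕ → ℝ => fun i => f (i + 1)) ν) :=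
    Measure.isProbabilityMeasure_map measurable_shift.aemeasurable
  exact hν.shift.unique hν

lemma IsIIDSeq.eval_iIndepFun [IsProbabilityMeasure ν] (hν : IsIIDSeq μ ν) :
    iIndepFun (fun i (f : ℕ → ℝ) => f i) ν := by
  rw [iIndepFun_iff_measure_inter_preimage_eq_mul]
  intro S sets hsets
  have heq : (⋂ i ∈ S, (fun f : ℕ → ℝ => f i) ⁻¹' sets i) = {f | ∀ i ∈ S, f i ∈ sets i} := by
    ext f; simp
  rw [heq, hν S sets hsets]
  exact Finset.prod_congr rfl fun i hi => (hν.cyl (hsets i hi) i).symm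

lemma IsIIDSeq.factor [IsProbabilityMeasure μ] [IsProbabilityMeasure ν] (hν : IsIIDSeq μ ν)
    {B : Set ℝ} (hB : MeasurableSet B) {C : Set (ℕ → ℝ)} (hC : MeasurableSet C) :
    ν ({f | f 0 ∈ B} ∩ (fun f i => f (i + 1)) ⁻¹' C) = μ B * ν C := by
  have hind : Indep (⨆ i ∈ ({0} : Set ℕ), MeasurableSpace.comap (fun f : ℕ → ℝ => f i) inferInstance)
      (⨆ i ∈ {i : ℕ | 1 ≤ i}, MeasurableSpace.comap (fun f : ℕ → ℝ => f i) inferInstance) ν := by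
    refine indep_iSup_of_disjoint (fun i => ?_) hν.eval_iIndepFun.iIndep ?_
    · exact (measurable_iff_comap_le).1 (measurable_pi_apply i)
    · rw [Set.disjoint_left]
      rintro a rfl
      simp
  have h1 : MeasurableSet[⨆ i ∈ ({0} : Set ℕ),
      MeasurableSpace.comap (fun f : ℕ → ℝ => f i) inferInstance] {f : ℕ → ℝ | f 0 ∈ B} := by
    have hm : MeasurableSet[MeasurableSpace.comap (fun f : ℕ → ℝ => f 0) inferInstance]
        {f : ℕ → ℝ | f 0 ∈ B} := ⟨B, hB, rfl⟩
    exact (le_iSup₂ (f := fun (i : ℕ) (_ : i ∈ ({0} : Set ℕ)) =>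
      MeasurableSpace.comap (fun f : ℕ → ℝ => f i) inferInstance) 0 rfl) _ hm
  have h2 : MeasurableSet[⨆ i ∈ {i : ℕ | 1 ≤ i},
      MeasurableSpace.comap (fun f : ℕ → ℝ => f i) inferInstance]
      ((fun f : ℕ → ℝ => fun i => f (i + 1)) ⁻¹' C) := by
    set M2 : MeasurableSpace (ℕ → ℝ) := ⨆ i ∈ {i : ℕ | 1 ≤ i},
        MeasurableSpace.comap (fun f : ℕ → ℝ => f i) inferInstance with hM2
    have hle : MeasurableSpace.comap (fun f : ℕ → ℝ => fun i => f (i + 1))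
        MeasurableSpace.pi ≤ M2 := by
      have hpi : (MeasurableSpace.pi : MeasurableSpace (ℕ → ℝ))
          = ⨆ i, MeasurableSpace.comap (fun f : ℕ → ℝ => f i) inferInstance := rfl
      rw [hpi, MeasurableSpace.comap_iSup]
      refine iSup_le fun i => ?_
      rw [MeasurableSpace.comap_comp]
      have : ((fun f : ℕ → ℝ => f i) ∘ (fun f : ℕ → ℝ => fun j => f (j + 1)))
          = fun f : ℕ → ℝ => f (i + 1) := rfl
      rw [this]
      exact le_iSup₂ (f := fun (j : ℕ) (_ : j ∈ {i : ℕ | 1 ≤ i}) =>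
        MeasurableSpace.comap (fun f : ℕ → ℝ => f j) inferInstance) (i + 1)
        (Nat.succ_le_succ (Nat.zero_le i))
    exact hle _ ⟨C, hC, rfl⟩
  rw [(Indep_iff _ _ _).1 hind _ _ h1 h2]
  congr 1
  · exact hν.cyl hB 0
  · rw [← Measure.map_apply measurable_shift hC, hν.shift_eq]

set_option linter.unusedSectionVars false
variable {μ : Measure ℝ} [IsProbabilityMeasure μ]

lemma meas_Ici_eq_Ioi (hcont : ∀ x : ℝ, μ {x} = 0) (x : ℝ) : μ (Ici x) = μ (Ioi x) := by
  have h : Ici x = {x} ∪ Ioi x := by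
    ext y
    simp only [mem_Ici, mem_union, mem_singleton_iff, mem_Ioi]
    rw [le_iff_eq_or_lt]
    exact or_congr_left eq_comm
  rw [h, measure_union (by simp) measurableSet_Ioi, hcont, zero_add]

lemma toReal_Iio (hcont : ∀ x : ℝ, μ {x} = 0) (x : ℝ) :
    (μ (Iio x)).toReal = 1 - (μ (Ioi x)).toReal := by
  have h : μ (Iio x) + μ (Ici x) = 1 := by
    rw [← measure_union (by simp [disjoint_left]) measurableSet_Ici,
      Iio_union_Ici, measure_univ]
  have h2 := congrArg ENNReal.toReal h
  rw [ENNReal.toReal_add (measure_ne_top μ _) (measure_ne_top μ _), ENNReal.toReal_one] at h2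
  rw [meas_Ici_eq_Ioi hcont] at h2
  linarith

lemma toReal_Ico (hcont : ∀ x : ℝ, μ {x} = 0) {x y : ℝ} (hxy : x ≤ y) :
    (μ (Ico x y)).toReal = (μ (Ioi x)).toReal - (μ (Ioi y)).toReal := by
  have h : μ (Ico x y) + μ (Ici y) = μ (Ici x) := by
    rw [← measure_union (by simp [disjoint_left]) measurableSet_Ici,
      Ico_union_Ici_eq_Ici hxy]
  have h2 := congrArg ENNReal.toReal h
  rw [ENNReal.toReal_add (measure_ne_top μ _) (measure_ne_top μ _)] at h2
  rw [meas_Ici_eq_Ioi hcont, meas_Ici_eq_Ioi hcont] at h2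
  linarith


section Renewal

variable {μ : Measure ℝ} [IsProbabilityMeasure μ] {ν : Measure (ℕ → ℝ)}
  [IsProbabilityMeasure ν]

lemma renewal_eq (hcont : ∀ x : ℝ, μ {x} = 0) (hν : IsIIDSeq μ ν)
    (γ β α : ℝ) (b c : ℕ → ℝ) (k l : ℕ) (hγβ : γ ≤ β)
    (hβα : ∀ j h, β ≤ α + b j - c h) :
    (ν (evSet γ β α b c k l)).toReal
      = (μ (Iio γ)).toReal * (ν (evSet γ β α b c k l)).toReal
        + (if k = 0 then 0 else (μ (Ico γ β)).toReal
            * (ν (evSet γ β α (fun j => b (j + 1)) c (k - 1) l)).toReal)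
        + (if l = 0 then 0 else (μ (Ico β (α + b 0 - c 0))).toReal
            * (ν (evSet β β α b (fun h => c (h + 1)) k (l - 1))).toReal)
        + (if k = 0 ∧ l = 0 then (μ (Ici (α + b 0 - c 0))).toReal else 0) := by
  set T := α + b 0 - c 0 with hT
  have hβT : β ≤ T := hβα 0 0
  set sh : (ℕ → ℝ) → (ℕ → ℝ) := fun f i => f (i + 1) with hsh
  set E := evSet γ β α b c k l with hE
  set C0 : Set (ℕ → ℝ) := {f | f 0 ∈ Iio γ} with hC0
  set CS : Set (ℕ → ℝ) := {f | f 0 ∈ Ico γ β} with hCS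
  set CW : Set (ℕ → ℝ) := {f | f 0 ∈ Ico β T} with hCW
  set CD : Set (ℕ → ℝ) := {f | f 0 ∈ Ici T} with hCD
  set SE : Set (ℕ → ℝ) := if k = 0 then ∅
    else sh ⁻¹' evSet γ β α (fun j => b (j + 1)) c (k - 1) l with hSE
  set WE : Set (ℕ → ℝ) := if l = 0 then ∅
    else sh ⁻¹' evSet β β α b (fun h => c (h + 1)) k (l - 1) with hWE
  set DE : Set (ℕ → ℝ) := if k = 0 ∧ l = 0 then (univ : Set (ℕ → ℝ)) else ∅ with hDE
  have hpart : E = (C0 ∩ sh ⁻¹' E) ∪ ((CS ∩ SE) ∪ ((CW ∩ WE) ∪ (CD ∩ DE))) := by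
    ext f
    constructor
    · intro hf
      rcases lt_or_ge (f 0) γ with h0 | h0
      · exact Or.inl ⟨h0, (evSet_null hγβ hβT h0 k l).1 hf⟩
      rcases lt_or_ge (f 0) β with h1 | h1
      · refine Or.inr (Or.inl ⟨⟨h0, h1⟩, ?_⟩)
        obtain ⟨hk, hmem⟩ := (evSet_str h0 h1 hβT k l).1 hf
        rw [hSE, if_neg (by omega)]
        exact hmem
      rcases lt_or_ge (f 0) T with h2 | h2
      · refine Or.inr (Or.inr (Or.inl ⟨⟨h1, h2⟩, ?_⟩))
        obtain ⟨hl, hmem⟩ := (evSet_weak h1 h2 k l).1 hf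
        rw [hWE, if_neg (by omega)]
        exact hmem
      · refine Or.inr (Or.inr (Or.inr ⟨h2, ?_⟩))
        obtain ⟨hk, hl⟩ := (evSet_fatal h2 k l).1 hf
        rw [hDE, if_pos ⟨hk, hl⟩]
        trivial
    · rintro (⟨h0, hmem⟩ | ⟨⟨h0, h1⟩, hmem⟩ | ⟨⟨h1, h2⟩, hmem⟩ | ⟨h2, hmem⟩)
      · exact (evSet_null hγβ hβT h0 k l).2 hmem
      · rw [hSE] at hmem
        by_cases hk : k = 0
        · rw [if_pos hk] at hmem; exact absurd hmem (notMem_empty f)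
        · rw [if_neg hk] at hmem
          exact (evSet_str h0 h1 hβT k l).2 ⟨by omega, hmem⟩
      · rw [hWE] at hmem
        by_cases hl : l = 0
        · rw [if_pos hl] at hmem; exact absurd hmem (notMem_empty f)
        · rw [if_neg hl] at hmem
          exact (evSet_weak h1 h2 k l).2 ⟨by omega, hmem⟩
      · rw [hDE] at hmem
        by_cases hkl : k = 0 ∧ l = 0
        · exact (evSet_fatal h2 k l).2 hkl
        · rw [if_neg hkl] at hmem; exact absurd hmem (notMem_empty f)
  -- measurability of pieces
  have mC0 : MeasurableSet C0 := measurable_pi_apply 0 measurableSet_Iio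
  have mCS : MeasurableSet CS := measurable_pi_apply 0 measurableSet_Ico
  have mCW : MeasurableSet CW := measurable_pi_apply 0 measurableSet_Ico
  have mCD : MeasurableSet CD := measurable_pi_apply 0 measurableSet_Ici
  have mE : MeasurableSet E := measurableSet_evSet γ β α b c k l
  have mSE : MeasurableSet SE := by
    rw [hSE]; split
    · exact MeasurableSet.empty
    · exact measurable_shift (measurableSet_evSet _ _ _ _ _ _ _)
  have mWE : MeasurableSet WE := by
    rw [hWE]; split
    · exact MeasurableSet.empty
    · exact measurable_shift (measurableSet_evSet _ _ _ _ _ _ _)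
  have mDE : MeasurableSet DE := by
    rw [hDE]; split
    · exact MeasurableSet.univ
    · exact MeasurableSet.empty
  -- disjointness
  have d01 : Disjoint C0 CS := by
    rw [disjoint_left]; rintro f h1 h2; exact absurd h2.1 (not_le.2 h1)
  have d02 : Disjoint C0 CW := by
    rw [disjoint_left]; rintro f h1 h2
    exact absurd (lt_of_lt_of_le h1 hγβ) (not_lt.2 h2.1)
  have d03 : Disjoint C0 CD := by
    rw [disjoint_left]; rintro f h1 h2
    exact absurd (lt_of_lt_of_le h1 (hγβ.trans hβT)) (not_lt.2 h2)
  have d12 : Disjoint CS CW := by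
    rw [disjoint_left]; rintro f h1 h2; exact absurd h2.1 (not_le.2 h1.2)
  have d13 : Disjoint CS CD := by
    rw [disjoint_left]; rintro f h1 h2
    exact absurd (lt_of_lt_of_le h1.2 hβT) (not_lt.2 h2)
  have d23 : Disjoint CW CD := by
    rw [disjoint_left]; rintro f h1 h2; exact absurd h2 (not_le.2 h1.2)
  -- split the measure
  have hsum : ν E = ν (C0 ∩ sh ⁻¹' E) + (ν (CS ∩ SE) + (ν (CW ∩ WE) + ν (CD ∩ DE))) := by
    conv_lhs => rw [hpart]
    rw [measure_union ((d01.mono inter_subset_left inter_subset_left).union_right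
        ((d02.mono inter_subset_left inter_subset_left).union_right
          (d03.mono inter_subset_left inter_subset_left)))
      ((mCS.inter mSE).union ((mCW.inter mWE).union (mCD.inter mDE)))]
    rw [measure_union ((d12.mono inter_subset_left inter_subset_left).union_right
        (d13.mono inter_subset_left inter_subset_left))
      ((mCW.inter mWE).union (mCD.inter mDE))]
    rw [measure_union (d23.mono inter_subset_left inter_subset_left) (mCD.inter mDE)]
  -- values of the pieces
  have v0 : ν (C0 ∩ sh ⁻¹' E) = μ (Iio γ) * ν E :=
    hν.factor measurableSet_Iio mE
  have vS : ν (CS ∩ SE) = if k = 0 then 0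
      else μ (Ico γ β) * ν (evSet γ β α (fun j => b (j + 1)) c (k - 1) l) := by
    rw [hSE]
    by_cases hk : k = 0
    · rw [if_pos hk, if_pos hk, inter_empty, measure_empty]
    · rw [if_neg hk, if_neg hk]
      exact hν.factor measurableSet_Ico (measurableSet_evSet _ _ _ _ _ _ _)
  have vW : ν (CW ∩ WE) = if l = 0 then 0
      else μ (Ico β T) * ν (evSet β β α b (fun h => c (h + 1)) k (l - 1)) := by
    rw [hWE]
    by_cases hl : l = 0
    · rw [if_pos hl, if_pos hl, inter_empty, measure_empty]
    · rw [if_neg hl, if_neg hl]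
      exact hν.factor measurableSet_Ico (measurableSet_evSet _ _ _ _ _ _ _)
  have vD : ν (CD ∩ DE) = if k = 0 ∧ l = 0 then μ (Ici T) else 0 := by
    rw [hDE]
    by_cases hkl : k = 0 ∧ l = 0
    · rw [if_pos hkl, if_pos hkl, inter_univ]
      exact hν.cyl measurableSet_Ici 0
    · rw [if_neg hkl, if_neg hkl, inter_empty, measure_empty]
  rw [v0, vS, vW, vD] at hsum
  have f1 : μ (Iio γ) * ν E ≠ ⊤ :=
    ENNReal.mul_ne_top (measure_ne_top μ _) (measure_ne_top ν _)
  have f2 : (if k = 0 then 0 else μ (Ico γ β)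
      * ν (evSet γ β α (fun j => b (j + 1)) c (k - 1) l)) ≠ ⊤ := by
    split
    · exact ENNReal.zero_ne_top
    · exact ENNReal.mul_ne_top (measure_ne_top μ _) (measure_ne_top ν _)
  have f3 : (if l = 0 then 0 else μ (Ico β T)
      * ν (evSet β β α b (fun h => c (h + 1)) k (l - 1))) ≠ ⊤ := by
    split
    · exact ENNReal.zero_ne_top
    · exact ENNReal.mul_ne_top (measure_ne_top μ _) (measure_ne_top ν _)
  have f4 : (if k = 0 ∧ l = 0 then μ (Ici T) else 0) ≠ ⊤ := by
    split
    · exact measure_ne_top μ _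
    · exact ENNReal.zero_ne_top
  have h2 := congrArg ENNReal.toReal hsum
  rw [ENNReal.toReal_add f1 (ENNReal.add_ne_top.2 ⟨f2, ENNReal.add_ne_top.2 ⟨f3, f4⟩⟩),
    ENNReal.toReal_add f2 (ENNReal.add_ne_top.2 ⟨f3, f4⟩),
    ENNReal.toReal_add f3 f4, ENNReal.toReal_mul,
    apply_ite ENNReal.toReal, apply_ite ENNReal.toReal, apply_ite ENNReal.toReal,
    ENNReal.toReal_mul, ENNReal.toReal_mul, ENNReal.toReal_zero] at h2
  linarith [h2]

end Renewal

section Exact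

variable {μ : Measure ℝ} [IsProbabilityMeasure μ] {ν : Measure (ℕ → ℝ)}
  [IsProbabilityMeasure ν]

lemma exact_prob (hcont : ∀ x : ℝ, μ {x} = 0) (hν : IsIIDSeq μ ν) :
    ∀ (n k l : ℕ) (γ β α : ℝ) (b c : ℕ → ℝ), k + l = n → γ ≤ β →
      (∀ j h, β ≤ α + b j - c h) → 0 < (μ (Ioi β)).toReal →
      (ν (evSet γ β α b c k l)).toReal =
        (((μ (Ioi γ)).toReal - (μ (Ioi β)).toReal) / (μ (Ioi γ)).toReal) ^ k *
          (∏ h ∈ Finset.range l,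
            (((μ (Ioi β)).toReal - (μ (Ioi (α + b k - c h))).toReal) / (μ (Ioi β)).toReal)) *
          ((μ (Ioi (α + b k - c l))).toReal / (μ (Ioi γ)).toReal) := by
  intro n
  induction n with
  | zero =>
      intro k l γ β α b c hn hγβ hβα hBpos
      obtain ⟨rfl, rfl⟩ : k = 0 ∧ l = 0 := by omega
      have hGpos : 0 < (μ (Ioi γ)).toReal :=
        lt_of_lt_of_le hBpos (by
          apply ENNReal.toReal_mono (measure_ne_top μ _)
          exact measure_mono (Ioi_subset_Ioi hγβ))
      have hren := renewal_eq hcont hν γ β α b c 0 0 hγβ hβα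
      rw [if_pos rfl, if_pos rfl, if_pos ⟨rfl, rfl⟩] at hren
      rw [toReal_Iio hcont, meas_Ici_eq_Ioi hcont] at hren
      simp only [pow_zero, Finset.range_zero, Finset.prod_empty, one_mul]
      rw [eq_div_iff (ne_of_gt hGpos)]
      nlinarith [hren]
  | succ n ih =>
      intro k l γ β α b c hn hγβ hβα hBpos
      have hGpos : 0 < (μ (Ioi γ)).toReal :=
        lt_of_lt_of_le hBpos (by
          apply ENNReal.toReal_mono (measure_ne_top μ _)
          exact measure_mono (Ioi_subset_Ioi hγβ))
      have hBne : (μ (Ioi β)).toReal ≠ 0 := ne_of_gt hBpos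
      have hGne : (μ (Ioi γ)).toReal ≠ 0 := ne_of_gt hGpos
      have hren := renewal_eq hcont hν γ β α b c k l hγβ hβα
      rcases Nat.eq_zero_or_pos k with hk | hk
      · subst hk
        have hlpos : l ≠ 0 := by omega
        have hln : 0 + (l - 1) = n := by omega
        rw [if_pos rfl, if_neg hlpos, if_neg (by simp [hlpos])] at hren
        rw [toReal_Iio hcont, toReal_Ico hcont (hβα 0 0)] at hren
        have hIH := ih 0 (l - 1) β β α b (fun h => c (h + 1)) hln le_rfl
          (fun j h => hβα j (h + 1)) hBpos
        rw [hIH] at hren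
        simp only [sub_self, zero_div, pow_zero, one_mul, add_zero, zero_add] at hren
        set G := (μ (Ioi γ)).toReal
        set B := (μ (Ioi β)).toReal
        set p := (ν (evSet γ β α b c 0 l)).toReal with hp
        set Q := ∏ h ∈ Finset.range (l - 1),
          ((B - (μ (Ioi (α + b 0 - c (h + 1)))).toReal) / B) with hQ
        have hc1 : (μ (Ioi (α + b 0 - c (l - 1 + 1)))).toReal
            = (μ (Ioi (α + b 0 - c l))).toReal := by
          rw [show l - 1 + 1 = l from by omega]
        rw [hc1] at hren
        set Al := (μ (Ioi (α + b 0 - c l))).toReal with hAl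
        set A0 := (μ (Ioi (α + b 0 - c 0))).toReal with hA0
        -- hren : p = (1 - G) * p + (B - A0) * (Q * (Al / B))
        have hsolve : G * p = (B - A0) * (Q * (Al / B)) := by linarith [hren]
        have hgoalprod : (∏ h ∈ Finset.range l,
            ((B - (μ (Ioi (α + b 0 - c h))).toReal) / B))
            = ((B - A0) / B) * Q := by
          conv_lhs => rw [show l = (l - 1) + 1 by omega]
          rw [Finset.prod_range_succ']
          exact mul_comm _ _
        rw [pow_zero, one_mul, hgoalprod]
        have hpe : p = (G * p) / G := by field_simp
        rw [hpe, hsolve]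
        field_simp
      · have hkne : k ≠ 0 := by omega
        have hkn : (k - 1) + l = n := by omega
        rw [if_neg (show ¬ (k = 0) from hkne),
          if_neg (show ¬ (k = 0 ∧ l = 0) from fun h => hkne h.1)] at hren
        rw [toReal_Iio hcont, toReal_Ico hcont hγβ] at hren
        have hIH := ih (k - 1) l γ β α (fun j => b (j + 1)) c hkn hγβ
          (fun j h => hβα (j + 1) h) hBpos
        rw [hIH] at hren
        simp only [show k - 1 + 1 = k from by omega] at hren
        set G := (μ (Ioi γ)).toReal
        set B := (μ (Ioi β)).toReal
        set p := (ν (evSet γ β α b c k l)).toReal with hp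
        set Q := ∏ h ∈ Finset.range l,
          ((B - (μ (Ioi (α + b k - c h))).toReal) / B) with hQ
        set Al := (μ (Ioi (α + b k - c l))).toReal with hAl
        have hWzero : (if l = 0 then (0:ℝ) else (μ (Ico β (α + b 0 - c 0))).toReal
            * (ν (evSet β β α b (fun h => c (h + 1)) k (l - 1))).toReal) = 0 := by
          rcases Nat.eq_zero_or_pos l with hl | hl
          · rw [if_pos hl]
          · rw [if_neg (by omega)]
            have hIH2 := ih k (l - 1) β β α b (fun h => c (h + 1))
              (by omega) le_rfl (fun j h => hβα j (h + 1)) hBpos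
            rw [hIH2]
            simp [sub_self, zero_div, zero_pow hkne]
        rw [hWzero, add_zero] at hren
        -- hren : p = (1 - G) * p + (G - B) * (((G-B)/G)^(k-1) * Q * (Al/G)) + 0
        have hsolve : G * p = (G - B) * (((G - B) / G) ^ (k - 1) * Q * (Al / G)) := by
          linarith [hren]
        have hpow : ((G - B) / G) ^ k = ((G - B) / G) ^ (k - 1) * ((G - B) / G) := by
          rw [← pow_succ, show k - 1 + 1 = k from by omega]
        rw [hpow]
        have hpe : p = (G * p) / G := by field_simp
        rw [hpe, hsolve]
        field_simp

end Exact

/-- asymptotic joint distribution of `(N₊(ν), N₋(ν))`: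
if `F̄(β(t))/F̄(γ(t)) → g ∈ (0,1)` and `F̄(α_{k,l}(t))/F̄(β(t)) → a_{k,l} ∈ (0,1)`, then
`P{N₊(ν)=k, N₋(ν)=l} → g (1-g)^k ∏_{h<l} (1-a_{k,h}) ⬝ a_{k,l}` as `t → ∞`. -/
theorem shock_joint_asymptotic
    {Ω : Type*} [MeasurableSpace Ω] (P : Measure Ω) [IsProbabilityMeasure P]
    (μ : Measure ℝ) [IsProbabilityMeasure μ]
    (X : ℕ → Ω → ℝ)
    (hindep : iIndepFun X P)
    (hdist : ∀ i, Measure.map (X i) P = μ)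
    (hcont : ∀ x : ℝ, μ {x} = 0)
    (γ β α : ℝ → ℝ) (b c : ℝ → ℕ → ℝ)
    (hγβ : ∀ t, γ t < β t)
    (hb : ∀ t, Monotone (b t)) (hc : ∀ t, Monotone (c t))
    (hb0 : ∀ t, b t 0 = 0) (hc0 : ∀ t, c t 0 = 0)
    (hβα : ∀ t, ∀ k l : ℕ, β t ≤ α t + b t k - c t l)
    (hγpos : ∀ t, 0 < survival μ (γ t))
    (hβ0 : Tendsto (fun t => survival μ (β t)) atTop (nhds 0))
    (g : ℝ) (hg : g ∈ Set.Ioo (0 : ℝ) 1)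
    (hgt : Tendsto (fun t => survival μ (β t) / survival μ (γ t)) atTop (nhds g))
    (a : ℕ → ℕ → ℝ) (ha : ∀ k l, a k l ∈ Set.Ioo (0 : ℝ) 1)
    (hat : ∀ k l : ℕ, Tendsto
      (fun t => survival μ (α t + b t k - c t l) / survival μ (β t)) atTop (nhds (a k l)))
    (k l : ℕ) :
    Tendsto (fun t =>
        (P {ω | (∃ i, fatalShock (γ t) (β t) (α t) (b t) (c t) (fun j => X j ω) i) ∧
          (shockCounts (γ t) (β t) (α t) (b t) (c t) (fun j => X j ω)
            (nuShock (γ t) (β t) (α t) (b t) (c t) (fun j => X j ω))) = (k, l)}).toReal)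
      atTop
      (nhds (g * (1 - g) ^ k * (∏ h ∈ Finset.range l, (1 - a k h)) * a k l)) := by

  -- measurable versions of the shocks
  have hXae : ∀ i, AEMeasurable (X i) P := by
    intro i
    by_contra h
    have h0 := Measure.map_of_not_aemeasurable h
    rw [hdist i] at h0
    have : (μ : Measure ℝ) univ = 1 := measure_univ
    rw [h0] at this
    simp at this
  set X' : ℕ → Ω → ℝ := fun i => (hXae i).mk (X i) with hX'
  have hmeas' : ∀ i, Measurable (X' i) := fun i => (hXae i).measurable_mk
  have heq : ∀ i, X i =ᵐ[P] X' i := fun i => (hXae i).ae_eq_mk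
  have hae : ∀ᵐ ω ∂P, ∀ i, X i ω = X' i ω := ae_all_iff.2 heq
  have hseq_meas : Measurable (fun ω => fun i => X' i ω) :=
    measurable_pi_lambda _ hmeas'
  set ν : Measure (ℕ → ℝ) := Measure.map (fun ω => fun i => X' i ω) P with hνdef
  haveI : IsProbabilityMeasure ν := Measure.isProbabilityMeasure_map hseq_meas.aemeasurable
  -- ν is the law of an iid sequence
  have hν : IsIIDSeq μ ν := by
    intro S t ht
    rw [hνdef, Measure.map_apply hseq_meas (measurableSet_fincyl S t ht)]
    have hpre : (fun ω => fun i => X' i ω) ⁻¹' {f | ∀ i ∈ S, f i ∈ t i}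
        = ⋂ i ∈ S, X' i ⁻¹' t i := by
      ext ω; simp
    rw [hpre]
    have hcongr : P (⋂ i ∈ S, X' i ⁻¹' t i) = P (⋂ i ∈ S, X i ⁻¹' t i) := by
      apply measure_congr
      filter_upwards [hae] with ω hω
      have hmem : (ω ∈ ⋂ i ∈ S, X' i ⁻¹' t i) ↔ (ω ∈ ⋂ i ∈ S, X i ⁻¹' t i) := by
        simp only [Set.mem_iInter, Set.mem_preimage]
        exact forall_congr' fun i => forall_congr' fun _ => by rw [hω i]
      exact propext hmem
    rw [hcongr, hindep.measure_inter_preimage_eq_mul S ht]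
    refine Finset.prod_congr rfl fun i _ => ?_
    rw [← Measure.map_apply_of_aemeasurable (hXae i) (ht i ‹_›), hdist i]
  -- identify the probabilities with ν of the event set
  have hPev : ∀ t : ℝ,
      P {ω | (∃ i, fatalShock (γ t) (β t) (α t) (b t) (c t) (fun j => X j ω) i) ∧
          (shockCounts (γ t) (β t) (α t) (b t) (c t) (fun j => X j ω)
            (nuShock (γ t) (β t) (α t) (b t) (c t) (fun j => X j ω))) = (k, l)}
        = ν (evSet (γ t) (β t) (α t) (b t) (c t) k l) := by
    intro t
    have h1 : P {ω | (∃ i, fatalShock (γ t) (β t) (α t) (b t) (c t) (fun j => X j ω) i) ∧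
          (shockCounts (γ t) (β t) (α t) (b t) (c t) (fun j => X j ω)
            (nuShock (γ t) (β t) (α t) (b t) (c t) (fun j => X j ω))) = (k, l)}
        = P ((fun ω => fun i => X' i ω) ⁻¹' evSet (γ t) (β t) (α t) (b t) (c t) k l) := by
      apply measure_congr
      filter_upwards [hae] with ω hω
      have hfeq : (fun j => X j ω) = fun j => X' j ω := funext hω
      exact congrArg (fun f : ℕ → ℝ =>
        ((∃ i, fatalShock (γ t) (β t) (α t) (b t) (c t) f i) ∧
          (shockCounts (γ t) (β t) (α t) (b t) (c t) f
            (nuShock (γ t) (β t) (α t) (b t) (c t) f)) = (k, l) : Prop)) hfeq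
    rw [h1, hνdef, Measure.map_apply hseq_meas
      (measurableSet_evSet (γ t) (β t) (α t) (b t) (c t) k l)]
  -- eventual positivity of the survival of β
  have hBev : ∀ᶠ t in atTop, 0 < survival μ (β t) := by
    have h2 : ∀ᶠ t in atTop, g / 2 < survival μ (β t) / survival μ (γ t) :=
      hgt.eventually (eventually_gt_nhds (by linarith [hg.1]))
    filter_upwards [h2] with t ht
    rcases lt_or_ge 0 (survival μ (β t)) with h | h
    · exact h
    · have hB0 : survival μ (β t) = 0 :=
        le_antisymm h ENNReal.toReal_nonneg
      rw [hB0, zero_div] at ht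
      linarith [hg.1]
  -- the probability equals the closed formula, eventually
  have hform : ∀ᶠ t in atTop,
      (P {ω | (∃ i, fatalShock (γ t) (β t) (α t) (b t) (c t) (fun j => X j ω) i) ∧
          (shockCounts (γ t) (β t) (α t) (b t) (c t) (fun j => X j ω)
            (nuShock (γ t) (β t) (α t) (b t) (c t) (fun j => X j ω))) = (k, l)}).toReal
        = (1 - survival μ (β t) / survival μ (γ t)) ^ k
          * (∏ h ∈ Finset.range l,
              (1 - survival μ (α t + b t k - c t h) / survival μ (β t)))
          * (survival μ (α t + b t k - c t l) / survival μ (β t)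
              * (survival μ (β t) / survival μ (γ t))) := by
    filter_upwards [hBev] with t hBt
    rw [hPev t]
    have hGne : survival μ (γ t) ≠ 0 := ne_of_gt (hγpos t)
    have hBne : survival μ (β t) ≠ 0 := ne_of_gt hBt
    have hex := exact_prob hcont hν (k + l) k l (γ t) (β t) (α t) (b t) (c t) rfl
      (hγβ t).le (fun j h => hβα t j h) hBt
    rw [hex]
    simp only [survival] at hGne hBne ⊢
    congr 1
    · congr 1
      · rw [sub_div, div_self hGne]
      · exact Finset.prod_congr rfl fun h _ => by rw [sub_div, div_self hBne]
    · field_simp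
  -- limit of the closed formula
  have hlim : Tendsto (fun t =>
      (1 - survival μ (β t) / survival μ (γ t)) ^ k
        * (∏ h ∈ Finset.range l,
            (1 - survival μ (α t + b t k - c t h) / survival μ (β t)))
        * (survival μ (α t + b t k - c t l) / survival μ (β t)
            * (survival μ (β t) / survival μ (γ t)))) atTop
      (nhds ((1 - g) ^ k * (∏ h ∈ Finset.range l, (1 - a k h)) * (a k l * g))) := by
    refine Tendsto.mul (Tendsto.mul ?_ ?_) ?_
    · exact (tendsto_const_nhds.sub hgt).pow k
    · exact tendsto_finset_prod _ fun h _ => tendsto_const_nhds.sub (hat k h)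
    · exact (hat k l).mul hgt
  have hpt : g * (1 - g) ^ k * (∏ h ∈ Finset.range l, (1 - a k h)) * a k l
      = (1 - g) ^ k * (∏ h ∈ Finset.range l, (1 - a k h)) * (a k l * g) := by ring
  rw [hpt]
  exact Tendsto.congr' (Filter.EventuallyEq.symm hform) hlim
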